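/- arXiv:1704.07860 — 3 statements merged into one kernel-verified Lean document; each statement's English description precedes it below -/
import Mathlib

section
/- For all positive integers k, n and all i ∈ {1, ..., n} and ℓ ∈ {0, ..., k-1}, every maximal factor of W_{k,n} over the subalphabet {a_1, ..., a_i} (i.e., a factor over {a_1,...,a_i} that cannot be extended in W_{k,n} by letters from {a_1,...,a_i}) is of the form W_{k-ℓ, i} for some ℓ ∈ {0, ..., k-1}. -/
/-- The word `W k n` over alphabet {1,...,n} (letter `a_i` encoded as `i`):
`W k 1 = a1^k`, `W 1 n = a1 a2 ... an`, `W k n = W k (n-1) ++ [a_n] ++ W (k-1) n`,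
and `W k n = ε` when `k = 0` or `n = 0`. -/
def W : ℕ → ℕ → List ℕ
  | 0, _ => []
  | _+1, 0 => []
  | k+1, n+1 => W (k+1) n ++ (n+1) :: W k (n+1)
termination_by k n => k + n

lemma W_mem_le (k n : ℕ) : ∀ c ∈ W k n, c ≤ n := by
  induction k, n using W.induct with
  | case1 => simp [W]
  | case2 => simp [W]
  | case3 k n ih1 ih2 =>
    intro c hc
    rw [W] at hc
    simp only [List.mem_append, List.mem_cons] at hc
    rcases hc with h | rfl | h
    · exact le_trans (ih1 c h) (Nat.le_succ n)
    · exact le_refl _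
    · exact ih2 c h

lemma factor_side {A B x f z : List ℕ} {s : ℕ}
    (h : A ++ s :: B = x ++ f ++ z) (hf : s ∉ f) (hne : f ≠ []) :
    (∃ z', A = x ++ f ++ z' ∧ z = z' ++ s :: B) ∨
    (∃ x', x = A ++ s :: x' ∧ B = x' ++ f ++ z) := by
  rw [List.append_assoc] at h
  rcases List.append_eq_append_iff.mp h.symm with ⟨a', hA, hfz⟩ | ⟨c', hx, hsB⟩
  · rcases List.append_eq_append_iff.mp hfz with ⟨b, ha', hz⟩ | ⟨b, hf', hsB⟩
    · exact Or.inl ⟨b, by rw [hA, ha', List.append_assoc], hz⟩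
    · cases b with
      | nil => exact Or.inl ⟨[], by simp [hA, hf'], by simpa using hsB.symm⟩
      | cons u t =>
        exfalso
        have : u = s := by simpa using (congrArg List.head? hsB).symm
        exact hf (this ▸ (hf'.symm ▸ List.mem_append_right a' (List.mem_cons_self (a := u) (l := t))))
  · cases c' with
    | nil =>
      exfalso
      simp only [List.nil_append] at hsB
      cases f with
      | nil => exact hne rfl
      | cons u t =>
        have : u = s := by simpa using (congrArg List.head? hsB).symm
        exact hf (this ▸ List.mem_cons_self (a := u) (l := t))
    | cons u t =>
      have hu : u = s := by simpa using (congrArg List.head? hsB).symm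
      refine Or.inr ⟨t, by rw [hx, hu], ?_⟩
      have := congrArg List.tail hsB
      simp only [List.cons_append, List.tail_cons] at this
      rw [List.append_assoc]; exact this

lemma key : ∀ N k n, k + n ≤ N → 1 ≤ k → 1 ≤ n → ∀ i, 1 ≤ i → i ≤ n →
    ∀ x f z, W k n = x ++ f ++ z → f ≠ [] → (∀ c ∈ f, c ≤ i) →
    (∀ c ∈ x.getLast?, i < c) → (∀ c ∈ z.head?, i < c) →
    ∃ ℓ, ℓ < k ∧ f = W (k - ℓ) i := by
  intro N
  induction N with
  | zero => intro k n h hk; omega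
  | succ N ih =>
    intro k n hN hk hn i hi hin x f z hsplit hne hsub hx hz
    rcases eq_or_lt_of_le hin with rfl | hlt
    · -- i = n : x and z must be empty
      have hxnil : x = [] := by
        by_contra hxne
        obtain ⟨c, hc⟩ := List.getLast?_isSome.mpr hxne |> Option.isSome_iff_exists.mp
        have hcmem : c ∈ W k i := by
          rw [hsplit]
          exact List.mem_append_left _ (List.mem_append_left _ ((List.mem_getLast?_eq_getLast hc).elim (fun h he => he ▸ List.getLast_mem h)))
        exact absurd (W_mem_le k i c hcmem) (not_le.mpr (hx c hc))
      have hznil : z = [] := by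
        by_contra hzne
        obtain ⟨c, hc⟩ := List.isSome_head?.mpr hzne |> Option.isSome_iff_exists.mp
        have hcmem : c ∈ W k i := by
          rw [hsplit]
          exact List.mem_append_right _ (List.mem_of_mem_head? hc)
        exact absurd (W_mem_le k i c hcmem) (not_le.mpr (hz c hc))
      refine ⟨0, hk, ?_⟩
      simpa [hxnil, hznil] using hsplit.symm
    · -- i < n
      obtain ⟨m, rfl⟩ : ∃ m, n = m + 1 := ⟨n - 1, by omega⟩
      obtain ⟨k', rfl⟩ : ∃ k', k = k' + 1 := ⟨k - 1, by omega⟩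
      rw [W] at hsplit
      have hsnot : (m + 1) ∉ f := fun hmem => by
        have := hsub _ hmem; omega
      rcases factor_side hsplit hsnot hne with ⟨z', hA, hzeq⟩ | ⟨x', hxeq, hB⟩
      · -- f inside W (k'+1) m
        refine ih (k' + 1) m (by omega) hk (by omega) i hi (by omega) x f z' hA hne hsub hx ?_
        intro c hc
        apply hz
        rw [hzeq]
        cases z' with
        | nil => simp at hc
        | cons a t => simpa using hc
      · -- f inside W k' (m+1)
        rcases Nat.eq_zero_or_pos k' with rfl | hk'
        · rw [W] at hB
          exact absurd (List.append_eq_nil_iff.mp (List.append_eq_nil_iff.mp hB.symm).1).2 hne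
        · obtain ⟨ℓ', hℓ', hf⟩ := ih k' (m + 1) (by omega) hk' hn i hi hin x' f z hB hne hsub
            (by
              intro c hc
              apply hx
              rw [hxeq]
              cases x' with
              | nil => simp at hc
              | cons a t =>
                exact List.mem_getLast?_append_of_mem_getLast? (List.mem_getLast?_cons hc))
            hz
          exact ⟨ℓ' + 1, by omega, by rw [hf]; congr 1; omega⟩

/-- Every maximal (nonempty) factor of `W_{k,n}` over the subalphabet
`{a_1, ..., a_i}` — a factor over `{a_1,...,a_i}` that cannot be extended in
`W_{k,n}` by letters from `{a_1,...,a_i}` — equals `W_{k-ℓ, i}` for some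
`ℓ ∈ {0, ..., k-1}`. -/
theorem stmt_5 (k n : ℕ) (hk : 1 ≤ k) (hn : 1 ≤ n) (i : ℕ) (hi : 1 ≤ i)
    (hin : i ≤ n) (x f z : List ℕ) (hsplit : W k n = x ++ f ++ z)
    (hne : f ≠ [])
    (hsub : ∀ c ∈ f, c ≤ i)
    (hx : ∀ c ∈ x.getLast?, i < c)
    (hz : ∀ c ∈ z.head?, i < c) :
    ∃ ℓ, ℓ < k ∧ f = W (k - ℓ) i := by
  exact key (k + n) k n le_rfl hk hn i hi hin x f z hsplit hne hsub hx hz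
end

section
/- Removing from A_{k,n} the non-accepting states (k+1; i), ..., (2k; i) for all 1 ≤ i ≤ n (and all transitions incident to them) results in an automaton that accepts the same language Σ_n* \ {W_{k,n}}; that is, these states and the transitions into them are redundant for the accepted language. -/
/-- States of the automaton `A_{k,n}`: `some (j, m)` is the state `(j; m)`
(`0 ≤ j ≤ 2k`, `1 ≤ m ≤ n`), and `none` is the sink state `max`. -/
abbrev ASt : Type := Option (ℕ × ℕ)

/-- The transition function of `A_{k,n}` (closed form of rules 1–6 of the paper):
from `(j;m)` under `a_l`: a self-loop if `l < m`; if `l = m` then to `(j+1;m')`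
for all `m' ≤ m` when `j < k`, to `max` when `j ∈ {k, 2k}`, and to `(j+1;m)`
otherwise; if `l > m` then to `max` when `(j;m)` is accepting (`j < k`) and to
`(k+1; l)` otherwise. `max` has self-loops under all letters. -/
def Astep (k : ℕ) : ASt → ℕ → Set ASt
  | none, _ => {none}
  | some (j, m), l =>
    if l < m then {some (j, m)}
    else if l = m then
      if j < k then {s | ∃ m', 1 ≤ m' ∧ m' ≤ m ∧ s = some (j+1, m')}
      else if j = k ∨ j = 2*k then {none}
      else {some (j+1, m)}
    else
      if j < k then {none} else {some (k+1, l)}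

/-- The ptNFA `A_{k,n}` over `Σ_n = {1,...,n}`, with initial states `(0;m)` and
accepting states `max` and the `(j;m)` with `j < k`. -/
def Aaut (k n : ℕ) : NFA ℕ ASt where
  step := Astep k
  start := {s | ∃ m, 1 ≤ m ∧ m ≤ n ∧ s = some (0, m)}
  accept := {none} ∪ {s | ∃ j m, j < k ∧ 1 ≤ m ∧ m ≤ n ∧ s = some (j, m)}

/-- The restriction of `A_{k,n}` obtained by removing the non-accepting states
`(k+1; i), ..., (2k; i)` for `1 ≤ i ≤ n` and all transitions incident to them. -/
def Aaut' (k n : ℕ) : NFA ℕ ASt where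
  step q a := Astep k q a ∩ {s | ∀ j m, s = some (j, m) → j ≤ k}
  start := (Aaut k n).start ∩ {s | ∀ j m, s = some (j, m) → j ≤ k}
  accept := (Aaut k n).accept ∩ {s | ∀ j m, s = some (j, m) → j ≤ k}

def AccF {α σ : Type*} (M : NFA α σ) : σ → List α → Prop
  | s, [] => s ∈ M.accept
  | s, a :: u => ∃ s' ∈ M.step s a, AccF M s' u

section
variable (k n : ℕ)

theorem step'_none (a : ℕ) : (Aaut' k n).step none a = {none} := by
  ext s
  simp only [Aaut', Astep, Set.mem_inter_iff, Set.mem_singleton_iff, Set.mem_setOf_eq]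
  constructor
  · tauto
  · rintro rfl
    exact ⟨rfl, by rintro j m h; cases h⟩

theorem step'_lt {a m j : ℕ} (h : a < m) (hj : j ≤ k) :
    (Aaut' k n).step (some (j, m)) a = {some (j, m)} := by
  ext s
  simp only [Aaut', Astep, if_pos h, Set.mem_inter_iff, Set.mem_singleton_iff, Set.mem_setOf_eq]
  constructor
  · tauto
  · rintro rfl
    exact ⟨rfl, by rintro j' m' ⟨rfl, rfl⟩; exact hj⟩

theorem step'_eq_lt {m j : ℕ} (h : j < k) :
    (Aaut' k n).step (some (j, m)) m = {s | ∃ m', 1 ≤ m' ∧ m' ≤ m ∧ s = some (j+1, m')} := by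
  ext s
  simp only [Aaut', Astep, if_neg (lt_irrefl m), if_pos rfl, if_pos h, Set.mem_inter_iff,
    Set.mem_setOf_eq]
  constructor
  · tauto
  · rintro ⟨m', h1, h2, rfl⟩
    exact ⟨⟨m', h1, h2, rfl⟩, by rintro j' m'' ⟨rfl, rfl⟩; omega⟩

theorem step'_eq_k {m : ℕ} : (Aaut' k n).step (some (k, m)) m = {none} := by
  ext s
  simp only [Aaut', Astep, if_neg (lt_irrefl m), if_pos rfl, if_neg (lt_irrefl k),
    if_pos (Or.inl rfl), Set.mem_inter_iff, Set.mem_singleton_iff, Set.mem_setOf_eq]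
  constructor
  · tauto
  · rintro rfl
    exact ⟨rfl, by rintro j' m' h; cases h⟩

theorem step'_gt_lt {a m j : ℕ} (h : m < a) (hj : j < k) :
    (Aaut' k n).step (some (j, m)) a = {none} := by
  ext s
  simp only [Aaut', Astep, if_neg (by omega : ¬ a < m), if_neg (by omega : ¬ a = m), if_pos hj,
    Set.mem_inter_iff, Set.mem_singleton_iff, Set.mem_setOf_eq]
  constructor
  · tauto
  · rintro rfl
    exact ⟨rfl, by rintro j' m' h; cases h⟩

theorem step'_gt_k {a m : ℕ} (h : m < a) :
    (Aaut' k n).step (some (k, m)) a = ∅ := by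
  ext s
  simp only [Aaut', Astep, if_neg (by omega : ¬ a < m), if_neg (by omega : ¬ a = m),
    if_neg (lt_irrefl k), Set.mem_inter_iff, Set.mem_singleton_iff, Set.mem_setOf_eq,
    Set.mem_empty_iff_false, iff_false, not_and]
  rintro rfl h'
  exact absurd (h' (k+1) a rfl) (by omega)

theorem accF_none' : ∀ u : List ℕ, AccF (Aaut' k n) none u := by
  intro u
  induction u with
  | nil =>
    show none ∈ _
    constructor
    · exact Or.inl rfl
    · rintro j m h; cases h
  | cons a u ih =>
    exact ⟨none, by rw [step'_none]; rfl, ih⟩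

theorem accF_acc' {j m : ℕ} (hj : j < k) (hm : 1 ≤ m) (hmn : m ≤ n) :
    AccF (Aaut' k n) (some (j, m)) [] := by
  show some (j, m) ∈ _
  exact ⟨Or.inr ⟨j, m, hj, hm, hmn, rfl⟩, by rintro j' m' ⟨rfl, rfl⟩; omega⟩

theorem accF_not_acc' {m : ℕ} : ¬ AccF (Aaut' k n) (some (k, m)) [] := by
  rintro ⟨h, -⟩
  rcases h with h | ⟨j', m', hj', -, -, h⟩
  · cases h
  · rw [Option.some_inj, Prod.mk.injEq] at h
    omega

theorem accF_loop {j m : ℕ} (hj : j ≤ k) :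
    ∀ (p : List ℕ), (∀ c ∈ p, c < m) → ∀ u,
      (AccF (Aaut' k n) (some (j, m)) (p ++ u) ↔ AccF (Aaut' k n) (some (j, m)) u) := by
  intro p
  induction p with
  | nil => intro _ u; rfl
  | cons a p ih =>
    intro hp u
    show (∃ s' ∈ (Aaut' k n).step _ a, AccF _ s' (p ++ u)) ↔ _
    rw [step'_lt k n (hp a (by simp)) hj]
    simp only [Set.mem_singleton_iff, exists_eq_left]
    exact ih (fun c hc => hp c (by simp [hc])) u

end
theorem W_zero (n : ℕ) : W 0 n = [] := by simp [W]
theorem W_zero' (k : ℕ) : W k 0 = [] := by cases k <;> simp [W]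
theorem W_succ (k n : ℕ) : W (k+1) (n+1) = W (k+1) n ++ (n+1) :: W k (n+1) := by rw [W]

theorem W_mem : ∀ k n, ∀ c ∈ W k n, 1 ≤ c ∧ c ≤ n := by
  intro k
  induction k with
  | zero => simp [W_zero]
  | succ k ihk =>
    intro n
    induction n with
    | zero => simp [W_zero']
    | succ n ihn =>
      rw [W_succ]
      intro c hc
      simp only [List.mem_append, List.mem_cons] at hc
      rcases hc with h | h | h
      · exact ⟨(ihn c h).1, (ihn c h).2.trans (Nat.le_succ n)⟩
      · omega
      · exact ihk (n+1) c h

theorem W_count : ∀ k n, 1 ≤ n → List.count n (W k n) = k := by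
  intro k
  induction k with
  | zero => intro n _; simp [W_zero]
  | succ k ihk =>
    rintro (_ | n) hn
    · omega
    · rw [W_succ, List.count_append, List.count_cons]
      have h0 : List.count (n+1) (W (k+1) n) = 0 := by
        rw [List.count_eq_zero]
        intro h
        have := W_mem (k+1) n _ h
        omega
      rw [h0, ihk (n+1) (by omega)]
      simp

theorem W_split : ∀ K t m, 1 ≤ m → m ≤ t →
    ∃ Z, W (K+1) t = W (K+1) (m-1) ++ m :: (W K m ++ Z) ∧
      (Z = [] ∨ ∃ c Z', Z = c :: Z' ∧ m < c) := by
  intro K t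
  induction t with
  | zero => omega
  | succ t iht =>
    intro m hm1 hmt
    rcases Nat.lt_or_ge m (t+1) with h | h
    · obtain ⟨Z, hZ, hZ'⟩ := iht m hm1 (by omega)
      refine ⟨Z ++ (t+1) :: W K (t+1), ?_, ?_⟩
      · rw [W_succ, hZ]; simp
      · rcases hZ' with rfl | ⟨c, Z', rfl, hc⟩
        · exact Or.inr ⟨t+1, W K (t+1), by simp, by omega⟩
        · exact Or.inr ⟨c, Z' ++ (t+1) :: W K (t+1), by simp, hc⟩
    · have : m = t+1 := by omega
      subst this
      exact ⟨[], by rw [W_succ]; simp, Or.inl rfl⟩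

theorem prefix_split {α : Type*} : ∀ (x : List α) (q y : List α) (z : α),
    q <+: x ++ z :: y → z ∉ q → q <+: x := by
  intro x
  induction x with
  | nil =>
    rintro (_ | ⟨c, q⟩) y z h hz
    · exact List.nil_prefix
    · obtain ⟨t, ht⟩ := h
      simp at ht
      simp [ht.1] at hz
  | cons a x ih =>
    rintro (_ | ⟨c, q⟩) y z h hz
    · exact List.nil_prefix
    · obtain ⟨t, ht⟩ := h
      simp only [List.cons_append, List.cons.injEq] at ht
      obtain ⟨rfl, ht⟩ := ht
      obtain ⟨t', ht'⟩ := ih q y z ⟨t, ht⟩ (by simp at hz ⊢; tauto)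
      exact ⟨t', by simp [← ht']⟩

theorem infix_split {α : Type*} : ∀ (u x q y v : List α) (z : α),
    u ++ q ++ v = x ++ z :: y → z ∉ q → q <:+: x ∨ q <:+: y := by
  intro u
  induction u with
  | nil =>
    intro x q y v z h hz
    left
    exact (prefix_split x q y z ⟨v, by simpa using h⟩ hz).isInfix
  | cons a u ih =>
    rintro (_ | ⟨b, x⟩) q y v z h hz
    · simp only [List.cons_append, List.nil_append, List.cons.injEq] at h
      right
      exact ⟨u, v, h.2⟩
    · simp only [List.cons_append, List.cons.injEq] at h
      rcases ih x q y v z (by simpa using h.2) hz with h' | h'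
      · exact Or.inl (h'.trans ⟨[b], [], by simp⟩)
      · exact Or.inr h'

theorem W_window : ∀ K t b q, q <:+: W K t → (∀ c ∈ q, c ≤ b) → List.count b q ≤ K := by
  intro K
  induction K with
  | zero =>
    intro t b q hq _
    rw [W_zero] at hq
    simp [List.eq_nil_of_infix_nil hq]
  | succ K ihk =>
    intro t
    induction t with
    | zero =>
      intro b q hq _
      rw [W_zero'] at hq
      simp [List.eq_nil_of_infix_nil hq]
    | succ t iht =>
      intro b q hq hb
      rcases Nat.lt_or_ge b (t+1) with h | h
      · have hz : (t+1) ∉ q := fun hc => by have := hb _ hc; omega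
        rw [W_succ] at hq
        obtain ⟨u, v, huv⟩ := hq
        rcases infix_split u (W (K+1) t) q (W K (t+1)) v (t+1) (by simpa using huv) hz with h' | h'
        · exact iht b q h' hb
        · exact (ihk (t+1) b q h' hb).trans (Nat.le_succ K)
      · have hcount := hq.sublist.count_le b
        rcases Nat.lt_or_ge (t+1) b with h' | h'
        · have : List.count b (W (K+1) (t+1)) = 0 := by
            rw [List.count_eq_zero]
            intro hc
            have := W_mem (K+1) (t+1) b hc
            omega
          omega
        · have : b = t+1 := by omega
          subst this
          rw [W_count (K+1) (t+1) (by omega)] at hcount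
          exact hcount

theorem accF_cons {α σ : Type*} (M : NFA α σ) (s : σ) (a : α) (u : List α) :
    AccF M s (a :: u) ↔ ∃ s' ∈ M.step s a, AccF M s' u := Iff.rfl

theorem charT (k n : ℕ) (hk : 1 ≤ k) :
    ∀ K, K ≤ k → ∀ t, t ≤ n → ∀ u : List ℕ, (∀ c ∈ u, 1 ≤ c) →
      ((∀ m, 1 ≤ m → m ≤ t → ¬ AccF (Aaut' k n) (some (k - K, m)) u) ↔
        ∃ v, u = W K t ++ v ∧ (v = [] ∨ ∃ c v', v = c :: v' ∧ t < c)) := by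
  intro K
  induction K with
  | zero =>
    intro _ t ht u hu
    simp only [Nat.sub_zero, W_zero, List.nil_append]
    constructor
    · intro H
      match u with
      | [] => exact ⟨[], rfl, Or.inl rfl⟩
      | c :: u' =>
        rcases Nat.lt_or_ge t c with h | h
        · exact ⟨c :: u', rfl, Or.inr ⟨c, u', rfl, h⟩⟩
        · exfalso
          apply H c (hu c (by simp)) h
          rw [accF_cons]
          exact ⟨none, by rw [step'_eq_k]; rfl, accF_none' k n u'⟩
    · rintro ⟨v, rfl, hv⟩ m hm1 hmt hA
      rcases hv with rfl | ⟨c, v', rfl, hc⟩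
      · exact accF_not_acc' k n hA
      · rw [accF_cons] at hA
        obtain ⟨s', hs', -⟩ := hA
        rw [step'_gt_k k n (by omega)] at hs'
        exact hs'
  | succ K ihK =>
    intro hK1 t
    have hjk : k - (K+1) < k := by omega
    have hj1 : k - (K+1) + 1 = k - K := by omega
    induction t with
    | zero =>
      intro _ u hu
      simp only [W_zero', List.nil_append]
      constructor
      · intro _
        match u with
        | [] => exact ⟨[], rfl, Or.inl rfl⟩
        | c :: u' => exact ⟨c :: u', rfl, Or.inr ⟨c, u', rfl, hu c (by simp)⟩⟩
      · intro _ m h1 h2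
        omega
    | succ t ihT =>
      intro htn u hu
      constructor
      · intro H
        obtain ⟨v, rfl, hv⟩ := (ihT (by omega) u hu).mp (fun m h1 h2 => H m h1 (by omega))
        have hWlt : ∀ c ∈ W (K+1) t, c < t+1 := fun c hc => by
          have := W_mem (K+1) t c hc; omega
        have hH := H (t+1) (by omega) le_rfl
        rw [accF_loop k n (le_of_lt hjk) _ hWlt] at hH
        rcases hv with rfl | ⟨c, v', rfl, hc⟩
        · exact absurd (accF_acc' k n hjk (by omega) htn) hH
        · rcases Nat.lt_or_ge c (t+2) with h | h
          · have hc1 : c = t+1 := by omega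
            subst hc1
            have hAll : ∀ m', 1 ≤ m' → m' ≤ t+1 → ¬ AccF (Aaut' k n) (some (k - K, m')) v' := by
              intro m' h1 h2 hA
              apply hH
              rw [accF_cons]
              refine ⟨some (k - (K+1) + 1, m'), ?_, ?_⟩
              · rw [step'_eq_lt k n hjk]
                exact ⟨m', h1, h2, rfl⟩
              · rw [hj1]
                exact hA
            obtain ⟨v'', rfl, hv''⟩ := (ihK (by omega) (t+1) htn v'
              (fun c hc => hu c (by simp [hc]))).mp hAll
            exact ⟨v'', by rw [W_succ]; simp, hv''⟩
          · exfalso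
            apply hH
            rw [accF_cons]
            exact ⟨none, by rw [step'_gt_lt k n (by omega) hjk]; rfl, accF_none' k n v'⟩
      · rintro ⟨v, rfl, hv⟩ m hm1 hmt hA
        obtain ⟨Z, hZeq, hZ⟩ := W_split K (t+1) m hm1 hmt
        rw [hZeq] at hA
        have hWlt : ∀ c ∈ W (K+1) (m-1), c < m := fun c hc => by
          have := W_mem (K+1) (m-1) c hc; omega
        rw [List.append_assoc, accF_loop k n (le_of_lt hjk) _ hWlt] at hA
        rw [show (m :: (W K m ++ Z)) ++ v = m :: (W K m ++ (Z ++ v)) by simp] at hA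
        rw [accF_cons] at hA
        obtain ⟨s', hs', hA'⟩ := hA
        rw [step'_eq_lt k n hjk] at hs'
        obtain ⟨m', h1, h2, rfl⟩ := hs'
        rw [hj1] at hA'
        have halph : ∀ c ∈ W K m ++ (Z ++ v), 1 ≤ c := by
          intro c hc
          simp only [List.mem_append] at hc
          rcases hc with h | h | h
          · exact (W_mem K m c h).1
          · have : c ∈ W (K+1) (t+1) := by
              rw [hZeq]; simp [h]
            exact (W_mem (K+1) (t+1) c this).1
          · exact hu c (by simp [h])
        have htail : Z ++ v = [] ∨ ∃ c v', Z ++ v = c :: v' ∧ m < c := by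
          rcases hZ with rfl | ⟨c, Z', rfl, hc⟩
          · rcases hv with rfl | ⟨c, v', rfl, hc⟩
            · exact Or.inl rfl
            · exact Or.inr ⟨c, v', rfl, by omega⟩
          · exact Or.inr ⟨c, Z' ++ v, rfl, hc⟩
        exact (ihK (by omega) m (le_trans hmt htn) _ halph).mpr
          ⟨Z ++ v, rfl, htail⟩ m' h1 h2 hA'

theorem accF_none_full (k n : ℕ) : ∀ u : List ℕ, AccF (Aaut k n) none u := by
  intro u
  induction u with
  | nil => exact Or.inl rfl
  | cons a u ih => exact ⟨none, rfl, ih⟩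

theorem regionBad (k n : ℕ) : ∀ u : List ℕ, ∀ j a, k + 1 ≤ j →
    AccF (Aaut k n) (some (j, a)) u →
    ∃ b p q r, u = p ++ q ++ r ∧ (∀ c ∈ q, c ≤ b) ∧
      ((p = [] ∧ b = a ∧ k + 1 ≤ List.count a q + (j - k)) ∨ k + 1 ≤ List.count b q) := by
  intro u
  induction u with
  | nil =>
    intro j a hj hA
    rcases hA with h | ⟨j', m', hj', -, -, h⟩
    · cases h
    · rw [Option.some_inj, Prod.mk.injEq] at h
      omega
  | cons c u ih =>
    intro j a hj hA
    obtain ⟨s', hs', hA'⟩ := hA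
    have hs : s' ∈ Astep k (some (j, a)) c := hs'
    simp only [Astep] at hs
    rcases Nat.lt_trichotomy c a with h | h | h
    · -- c < a : self-loop
      rw [if_pos h, Set.mem_singleton_iff] at hs
      subst hs
      obtain ⟨b, p, q, r, hu, hq, hbr⟩ := ih j a hj hA'
      rcases hbr with ⟨rfl, hba, hcnt⟩ | hcnt
      · refine ⟨b, [], c :: q, r, by simp [hu], ?_, Or.inl ⟨rfl, hba, ?_⟩⟩
        · intro x hx
          rcases List.mem_cons.mp hx with rfl | hx
          · omega
          · exact hq x hx
        · rw [List.count_cons_of_ne (by omega : c ≠ a)]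
          exact hcnt
      · exact ⟨b, c :: p, q, r, by simp [hu], hq, Or.inr hcnt⟩
    · -- c = a
      rw [if_neg (by omega), if_pos h, if_neg (by omega : ¬ j < k)] at hs
      by_cases h2k : j = k ∨ j = 2 * k
      · rw [if_pos h2k, Set.mem_singleton_iff] at hs
        have hj2k : j = 2 * k := by omega
        refine ⟨a, [], [c], u, by simp, by intro x hx; simp at hx; omega,
          Or.inl ⟨rfl, rfl, ?_⟩⟩
        rw [h]
        simp
        omega
      · rw [if_neg h2k, Set.mem_singleton_iff] at hs
        subst hs
        obtain ⟨b, p, q, r, hu, hq, hbr⟩ := ih (j+1) a (by omega) hA'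
        rcases hbr with ⟨rfl, hba, hcnt⟩ | hcnt
        · refine ⟨b, [], c :: q, r, by simp [hu], ?_, Or.inl ⟨rfl, hba, ?_⟩⟩
          · intro x hx
            rcases List.mem_cons.mp hx with rfl | hx
            · omega
            · exact hq x hx
          · rw [h, List.count_cons_self]
            omega
        · exact ⟨b, c :: p, q, r, by simp [hu], hq, Or.inr hcnt⟩
    · -- c > a : reset to (k+1, c)
      rw [if_neg (by omega), if_neg (by omega), if_neg (by omega : ¬ j < k),
        Set.mem_singleton_iff] at hs
      subst hs
      obtain ⟨b, p, q, r, hu, hq, hbr⟩ := ih (k+1) c le_rfl hA'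
      rcases hbr with ⟨rfl, hba, hcnt⟩ | hcnt
      · refine ⟨b, [], c :: q, r, by simp [hu], ?_, Or.inr ?_⟩
        · intro x hx
          rcases List.mem_cons.mp hx with rfl | hx
          · omega
          · exact hq x hx
        · rw [hba, List.count_cons_self]
          omega
      · exact ⟨b, c :: p, q, r, by simp [hu], hq, Or.inr hcnt⟩

theorem liftLow (k n : ℕ) : ∀ u : List ℕ, ∀ j m, j ≤ k →
    AccF (Aaut k n) (some (j, m)) u →
    AccF (Aaut' k n) (some (j, m)) u ∨
      ∃ b p q r, u = p ++ q ++ r ∧ (∀ c ∈ q, c ≤ b) ∧ k + 1 ≤ List.count b q := by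
  intro u
  induction u with
  | nil =>
    intro j m hj hA
    left
    exact ⟨hA, by rintro j' m' ⟨rfl, rfl⟩; exact hj⟩
  | cons c u ih =>
    intro j m hj hA
    obtain ⟨s', hs', hA'⟩ := hA
    have hs : s' ∈ Astep k (some (j, m)) c := hs'
    simp only [Astep] at hs
    rcases Nat.lt_trichotomy c m with h | h | h
    · -- c < m
      rw [if_pos h, Set.mem_singleton_iff] at hs
      subst hs
      rcases ih j m hj hA' with h' | ⟨b, p, q, r, hu, hq, hcnt⟩
      · left
        rw [accF_cons, step'_lt k n h hj]
        exact ⟨some (j, m), rfl, h'⟩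
      · exact Or.inr ⟨b, c :: p, q, r, by simp [hu], hq, hcnt⟩
    · -- c = m
      rw [if_neg (by omega), if_pos h] at hs
      rcases Nat.lt_or_ge j k with hlt | hge
      · rw [if_pos hlt] at hs
        obtain ⟨m', hm1, hm2, rfl⟩ := hs
        rcases ih (j+1) m' (by omega) hA' with h' | ⟨b, p, q, r, hu, hq, hcnt⟩
        · left
          rw [accF_cons, h, step'_eq_lt k n hlt]
          exact ⟨some (j+1, m'), ⟨m', hm1, by omega, rfl⟩, h'⟩
        · exact Or.inr ⟨b, c :: p, q, r, by simp [hu], hq, hcnt⟩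
      · have hjk : j = k := by omega
        left
        rw [accF_cons, h, hjk, step'_eq_k k n]
        exact ⟨none, rfl, accF_none' k n u⟩
    · -- c > m
      rcases Nat.lt_or_ge j k with hlt | hge
      · rw [if_neg (by omega), if_neg (by omega), if_pos hlt, Set.mem_singleton_iff] at hs
        left
        rw [accF_cons, step'_gt_lt k n h hlt]
        exact ⟨none, rfl, accF_none' k n u⟩
      · rw [if_neg (by omega), if_neg (by omega), if_neg (by omega : ¬ j < k),
          Set.mem_singleton_iff] at hs
        subst hs
        obtain ⟨b, p, q, r, hu, hq, hbr⟩ := regionBad k n u (k+1) c le_rfl hA'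
        rcases hbr with ⟨rfl, hba, hcnt⟩ | hcnt
        · refine Or.inr ⟨b, [], c :: q, r, by simp [hu], ?_, ?_⟩
          · intro x hx
            rcases List.mem_cons.mp hx with rfl | hx
            · omega
            · exact hq x hx
          · rw [hba, List.count_cons_self]
            omega
        · exact Or.inr ⟨b, c :: p, q, r, by simp [hu], hq, hcnt⟩

theorem accF_evalFrom {α σ : Type*} (M : NFA α σ) (w : List α) :
    ∀ S : Set σ, (∃ f ∈ M.accept, f ∈ M.evalFrom S w) ↔ ∃ s ∈ S, AccF M s w := by
  induction w with
  | nil => intro S; simp [NFA.evalFrom, AccF]; tauto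
  | cons a w ih =>
    intro S
    have : M.evalFrom S (a :: w) = M.evalFrom (M.stepSet S a) w := rfl
    rw [this, ih]
    constructor
    · rintro ⟨s', hs', h⟩
      rw [NFA.mem_stepSet] at hs'
      obtain ⟨s, hs, hstep⟩ := hs'
      exact ⟨s, hs, s', hstep, h⟩
    · rintro ⟨s, hs, s', hstep, h⟩
      exact ⟨s', NFA.mem_stepSet .. |>.2 ⟨s, hs, hstep⟩, h⟩

theorem mem_accepts_iff {α σ : Type*} (M : NFA α σ) (w : List α) :
    w ∈ M.accepts ↔ ∃ s ∈ M.start, AccF M s w := by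
  rw [NFA.mem_accepts]; exact accF_evalFrom M w M.start


theorem accF_mono (k n : ℕ) : ∀ (u : List ℕ) (s : ASt),
    AccF (Aaut' k n) s u → AccF (Aaut k n) s u := by
  intro u
  induction u with
  | nil => intro s h; exact h.1
  | cons a u ih =>
    rintro s ⟨s', hs', h⟩
    exact ⟨s', hs'.1, ih s' h⟩

theorem mem_accepts'_iff (k n : ℕ) (w : List ℕ) :
    w ∈ (Aaut' k n).accepts ↔ ∃ m, 1 ≤ m ∧ m ≤ n ∧ AccF (Aaut' k n) (some (0, m)) w := by
  rw [mem_accepts_iff]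
  constructor
  · rintro ⟨s, ⟨⟨m, h1, h2, rfl⟩, -⟩, h⟩
    exact ⟨m, h1, h2, h⟩
  · rintro ⟨m, h1, h2, h⟩
    exact ⟨some (0, m), ⟨⟨m, h1, h2, rfl⟩, by rintro j' m' ⟨rfl, rfl⟩; omega⟩, h⟩

theorem mem_accepts_full_iff (k n : ℕ) (w : List ℕ) :
    w ∈ (Aaut k n).accepts ↔ ∃ m, 1 ≤ m ∧ m ≤ n ∧ AccF (Aaut k n) (some (0, m)) w := by
  rw [mem_accepts_iff]
  constructor
  · rintro ⟨s, ⟨m, h1, h2, rfl⟩, h⟩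
    exact ⟨m, h1, h2, h⟩
  · rintro ⟨m, h1, h2, h⟩
    exact ⟨some (0, m), ⟨m, h1, h2, rfl⟩, h⟩

theorem W_not_acc' (k n : ℕ) (hk : 1 ≤ k) {m : ℕ} (h1 : 1 ≤ m) (h2 : m ≤ n) :
    ¬ AccF (Aaut' k n) (some (0, m)) (W k n) := by
  have := (charT k n hk k le_rfl n le_rfl (W k n) (fun c hc => (W_mem k n c hc).1)).mpr
    ⟨[], by simp, Or.inl rfl⟩ m h1 h2
  rwa [Nat.sub_self] at this

theorem W_not_full (k n : ℕ) (hk : 1 ≤ k) : W k n ∉ (Aaut k n).accepts := by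
  rw [mem_accepts_full_iff]
  rintro ⟨m, h1, h2, h⟩
  rcases liftLow k n (W k n) 0 m (Nat.zero_le k) h with h' | ⟨b, p, q, r, hu, hq, hcnt⟩
  · exact W_not_acc' k n hk h1 h2 h'
  · have hinf : q <:+: W k n := ⟨p, r, hu.symm⟩
    have := W_window k n b q hinf hq
    omega

theorem ne_W_acc' (k n : ℕ) (hk : 1 ≤ k) (w : List ℕ) (hw : ∀ c ∈ w, 1 ≤ c ∧ c ≤ n)
    (hne : w ≠ W k n) : w ∈ (Aaut' k n).accepts := by
  rw [mem_accepts'_iff]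
  by_contra hcon
  push_neg at hcon
  have hall : ∀ m, 1 ≤ m → m ≤ n → ¬ AccF (Aaut' k n) (some (k - k, m)) w := by
    intro m hm1 hm2 hA
    rw [Nat.sub_self] at hA
    exact hcon m hm1 hm2 hA
  obtain ⟨v, rfl, hv⟩ := (charT k n hk k le_rfl n le_rfl w (fun c hc => (hw c hc).1)).mp hall
  rcases hv with rfl | ⟨c, v', rfl, hc⟩
  · exact hne (by simp)
  · have : c ∈ W k n ++ c :: v' := by simp
    have := (hw c this).2
    omega

/-- Removing from `A_{k,n}` the non-accepting states `(k+1;i),...,(2k;i)` for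
`1 ≤ i ≤ n` (and the incident transitions) yields an automaton accepting the
same language `Σ_n* \ {W_{k,n}}`. -/
theorem stmt_17 (k n : ℕ) (hk : 1 ≤ k) (hn : 1 ≤ n) (w : List ℕ)
    (hw : ∀ c ∈ w, 1 ≤ c ∧ c ≤ n) :
    (w ∈ (Aaut' k n).accepts ↔ w ∈ (Aaut k n).accepts) ∧
    (w ∈ (Aaut' k n).accepts ↔ w ≠ W k n) := by
  have mono : w ∈ (Aaut' k n).accepts → w ∈ (Aaut k n).accepts := by
    rw [mem_accepts'_iff, mem_accepts_full_iff]
    rintro ⟨m, h1, h2, h⟩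
    exact ⟨m, h1, h2, accF_mono k n w _ h⟩
  constructor
  · constructor
    · exact mono
    · intro h
      have hne : w ≠ W k n := by
        rintro rfl
        exact W_not_full k n hk h
      exact ne_W_acc' k n hk w hw hne
  · constructor
    · intro h
      rintro rfl
      exact W_not_full k n hk (mono h)
    · exact ne_W_acc' k n hk w hw
end

section
/- If a universal word problem reduction holds — namely, the word W_{k,n} is the unique non-accepted word of A_{k,n} — then A_{k,n} rejects W_{k,n}: after reading the prefix W_{k,n-1} a_n, the automaton A_{k,n} can only be in one of the states (1;m) for 1 ≤ m ≤ n or in state (k+1;n), and from none of these states is the remaining suffix W_{k-1,n} accepted. -/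

lemma W_letters : ∀ k m, ∀ l ∈ W k m, 1 ≤ l ∧ l ≤ m := by
  intro k m
  induction k, m using W.induct with
  | case1 => simp [W]
  | case2 => simp [W]
  | case3 k n ih1 ih2 =>
    intro l hl
    rw [W] at hl
    simp only [List.mem_append, List.mem_cons] at hl
    rcases hl with h | h | h
    · have := ih1 l h; omega
    · omega
    · exact ih2 l h

lemma W_count_s18 (k n : ℕ) : (W k (n+1)).count (n+1) = k := by
  induction k with
  | zero => simp [W]
  | succ k ih =>
    rw [W]
    have h0 : (W (k+1) n).count (n+1) = 0 := by
      rw [List.count_eq_zero]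
      intro h
      have := W_letters (k+1) n _ h
      omega
    simp [List.count_append, List.count_cons, h0, ih]

lemma stepSet_singleton' (k n : ℕ) (s : ASt) (a : ℕ) :
    (Aaut k n).stepSet {s} a = Astep k s a := by
  simp [NFA.stepSet]; rfl

lemma evalFrom_cons (k n : ℕ) (S : Set ASt) (a : ℕ) (w : List ℕ) :
    (Aaut k n).evalFrom S (a :: w) = (Aaut k n).evalFrom ((Aaut k n).stepSet S a) w := rfl


lemma none_persist0 (k n : ℕ) (S : Set ASt) (w : List ℕ) (h : (none : ASt) ∈ S) :
    (none : ASt) ∈ (Aaut k n).evalFrom S w := by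
  induction w generalizing S with
  | nil => exact h
  | cons a w ih =>
    rw [evalFrom_cons]
    exact ih _ ((Aaut k n).mem_stepSet |>.mpr ⟨none, h, rfl⟩)

lemma evalFrom_mono (k n : ℕ) (S T : Set ASt) (h : S ⊆ T) (w : List ℕ) :
    (Aaut k n).evalFrom S w ⊆ (Aaut k n).evalFrom T w := by
  induction w generalizing S T with
  | nil => exact h
  | cons a w ih =>
    rw [evalFrom_cons, evalFrom_cons]
    apply ih
    intro x hx
    obtain ⟨t, ht, hx⟩ := (Aaut k n).mem_stepSet |>.mp hx
    exact (Aaut k n).mem_stepSet |>.mpr ⟨t, h ht, hx⟩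

lemma mem_evalFrom_decomp (k n : ℕ) (S : Set ASt) (w : List ℕ) (f : ASt)
    (hf : f ∈ (Aaut k n).evalFrom S w) : ∃ q ∈ S, f ∈ (Aaut k n).evalFrom {q} w := by
  induction w generalizing S with
  | nil => exact ⟨f, hf, rfl⟩
  | cons a w ih =>
    rw [evalFrom_cons] at hf
    obtain ⟨q', hq', hfq⟩ := ih _ hf
    obtain ⟨t, ht, hq't⟩ := (Aaut k n).mem_stepSet |>.mp hq'
    refine ⟨t, ht, ?_⟩
    rw [evalFrom_cons]
    refine evalFrom_mono k n {q'} _ ?_ w hfq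
    intro x hx
    rw [Set.mem_singleton_iff] at hx
    subst hx
    exact (Aaut k n).mem_stepSet |>.mpr ⟨t, rfl, hq't⟩

lemma evalFrom_append (k n : ℕ) (S : Set ASt) (u v : List ℕ) :
    (Aaut k n).evalFrom S (u ++ v) = (Aaut k n).evalFrom ((Aaut k n).evalFrom S u) v := by
  simp [NFA.evalFrom, List.foldl_append]

-- self loop
lemma eval_loop (k n j m : ℕ) (w : List ℕ) (hw : ∀ l ∈ w, l < m) :
    (Aaut k n).evalFrom {some (j, m)} w = {some (j, m)} := by
  induction w with
  | nil => rfl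
  | cons a w ih =>
    rw [evalFrom_cons, stepSet_singleton']
    have ha : a < m := hw a (by simp)
    have : Astep k (some (j, m)) a = {some (j, m)} := by simp [Astep, ha]
    rw [this]
    exact ih (fun l hl => hw l (by simp [hl]))


lemma eval_high (k n j : ℕ) (w : List ℕ) (hw : ∀ l ∈ w, l ≤ n) (hj : k < j)
    (hc : j + w.count n ≤ 2 * k) :
    (Aaut k n).evalFrom {some (j, n)} w = {some (j + w.count n, n)} := by
  induction w generalizing j with
  | nil => simp
  | cons a w ih =>
    have ha : a ≤ n := hw a (by simp)
    have hw' : ∀ l ∈ w, l ≤ n := fun l hl => hw l (List.mem_cons_of_mem _ hl)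
    rw [evalFrom_cons, stepSet_singleton']
    rcases lt_or_eq_of_le ha with ha' | rfl
    · have hstep : Astep k (some (j, n)) a = {some (j, n)} := by simp [Astep, ha']
      have hcnt : (a :: w).count n = w.count n := by
        rw [List.count_cons]; simp [Nat.ne_of_lt ha']
      rw [hcnt] at hc
      rw [hstep, hcnt]
      exact ih j hw' hj hc
    · have hcnt : (a :: w).count a = w.count a + 1 := by simp [List.count_cons]
      rw [hcnt] at hc ⊢
      have hstep : Astep k (some (j, a)) a = {some (j + 1, a)} := by
        have h1 : ¬ j < k := by omega
        have h2 : ¬ (j = k ∨ j = 2 * k) := by omega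
        simp [Astep, h1, h2]
      rw [hstep, ih (j+1) hw' (by omega) (by omega)]
      have he : j + 1 + w.count a = j + (w.count a + 1) := by omega
      rw [he]

lemma step_good (k N : ℕ) (t s : ASt) (l : ℕ) (hl : 1 ≤ l ∧ l ≤ N)
    (ht : ∀ j m, t = some (j, m) → 1 ≤ m ∧ m ≤ N)
    (hs : s ∈ Astep k t l) : ∀ j m, s = some (j, m) → 1 ≤ m ∧ m ≤ N := by
  match t with
  | none =>
    simp only [Astep, Set.mem_singleton_iff] at hs
    subst hs; intro j m h; cases h
  | some (j, m) =>
    have hm := ht j m rfl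
    simp only [Astep] at hs
    split_ifs at hs with h1 h2 h3 h4 h5
    · rw [Set.mem_singleton_iff] at hs; subst hs; intro j' m' h; cases h; exact hm
    · obtain ⟨m', hm1, hm2, rfl⟩ := hs
      intro j' m'' h; cases h; omega
    · rw [Set.mem_singleton_iff] at hs; subst hs; intro j' m' h; cases h
    · rw [Set.mem_singleton_iff] at hs; subst hs; intro j' m' h; cases h; exact hm
    · rw [Set.mem_singleton_iff] at hs; subst hs; intro j' m' h; cases h
    · rw [Set.mem_singleton_iff] at hs; subst hs; intro j' m' h; cases h; exact hl

lemma eval_bound (k n N : ℕ) (w : List ℕ) (S : Set ASt)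
    (hw : ∀ l ∈ w, 1 ≤ l ∧ l ≤ N)
    (hS : ∀ s ∈ S, ∀ j m, s = some (j, m) → 1 ≤ m ∧ m ≤ N) :
    ∀ s ∈ (Aaut k n).evalFrom S w, ∀ j m, s = some (j, m) → 1 ≤ m ∧ m ≤ N := by
  induction w generalizing S with
  | nil => exact hS
  | cons a w ih =>
    rw [evalFrom_cons]
    refine ih _ (fun l hl => hw l (List.mem_cons_of_mem _ hl)) ?_
    intro s hs
    obtain ⟨t, ht, hst⟩ := (Aaut k n).mem_stepSet |>.mp hs
    exact step_good k N t s a (hw a (by simp)) (hS t ht) hst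

def phi : ASt → ASt
  | none => none
  | some (j, m) => some (j+1, m)

lemma simStep (K j m l : ℕ) (hK : 1 ≤ K) (hj : j ≤ 2 * K)
    (hnone : (none : ASt) ∉ Astep K (some (j, m)) l) :
    Astep (K+1) (some (j+1, m)) l ⊆ phi '' Astep K (some (j, m)) l ∧
    ∀ j' m', some (j', m') ∈ Astep K (some (j, m)) l → j' ≤ 2 * K := by
  by_cases h1 : l < m
  · constructor
    · intro s hs
      simp only [Astep, if_pos h1, Set.mem_singleton_iff] at hs ⊢
      subst hs
      exact ⟨some (j, m), rfl, rfl⟩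
    · intro j' m' h
      simp only [Astep, if_pos h1, Set.mem_singleton_iff] at h
      cases h; omega
  · by_cases h2 : l = m
    · by_cases h3 : j < K
      · have h3' : j + 1 < K + 1 := by omega
        constructor
        · intro s hs
          simp only [Astep, if_neg h1, if_pos h2, if_pos h3, if_pos h3',
            Set.mem_setOf_eq] at hs ⊢
          obtain ⟨m', hm1, hm2, rfl⟩ := hs
          exact ⟨some (j+1, m'), ⟨m', hm1, hm2, rfl⟩, rfl⟩
        · intro j' m' h
          simp only [Astep, if_neg h1, if_pos h2, if_pos h3, Set.mem_setOf_eq] at h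
          obtain ⟨m'', _, _, heq⟩ := h
          cases heq; omega
      · by_cases h4 : j = K ∨ j = 2 * K
        · exfalso
          apply hnone
          simp [Astep, h1, h2, h3, h4]
        · have h3' : ¬ j + 1 < K + 1 := by omega
          have h4' : ¬ (j + 1 = K + 1 ∨ j + 1 = 2 * (K + 1)) := by omega
          constructor
          · intro s hs
            simp only [Astep, if_neg h1, if_pos h2, if_neg h3, if_neg h4, if_neg h3',
              if_neg h4', Set.mem_singleton_iff] at hs ⊢
            subst hs
            exact ⟨some (j+1, m), rfl, rfl⟩
          · intro j' m' h
            simp only [Astep, if_neg h1, if_pos h2, if_neg h3, if_neg h4,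
              Set.mem_singleton_iff] at h
            cases h; omega
    · by_cases h3 : j < K
      · exfalso
        apply hnone
        simp [Astep, h1, h2, h3]
      · have h3' : ¬ j + 1 < K + 1 := by omega
        constructor
        · intro s hs
          simp only [Astep, if_neg h1, if_neg h2, if_neg h3, if_neg h3',
            Set.mem_singleton_iff] at hs ⊢
          subst hs
          exact ⟨some (K+1, l), rfl, rfl⟩
        · intro j' m' h
          simp only [Astep, if_neg h1, if_neg h2, if_neg h3, Set.mem_singleton_iff] at h
          cases h; omega

lemma none_persist' (k n : ℕ) (S : Set ASt) (w : List ℕ) (h : (none : ASt) ∈ S) :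
    (none : ASt) ∈ (Aaut k n).evalFrom S w := by
  induction w generalizing S with
  | nil => exact h
  | cons a w ih =>
    rw [evalFrom_cons]
    exact ih _ ((Aaut k n).mem_stepSet |>.mpr ⟨none, h, rfl⟩)

lemma sim (K n : ℕ) (hK : 1 ≤ K) (w : List ℕ) (S : Set ASt)
    (hS : ∀ j m, some (j, m) ∈ S → j ≤ 2 * K)
    (hnone : (none : ASt) ∉ (Aaut K n).evalFrom S w) :
    (Aaut (K+1) n).evalFrom (phi '' S) w ⊆ phi '' ((Aaut K n).evalFrom S w) := by
  induction w generalizing S with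
  | nil => exact subset_rfl
  | cons a w ih =>
    have hnS : (none : ASt) ∉ S := fun h => hnone (none_persist' K n S _ h)
    have hnstep : (none : ASt) ∉ (Aaut K n).stepSet S a := by
      intro h
      exact hnone (none_persist' K n _ w h)
    have hkey : (Aaut (K+1) n).stepSet (phi '' S) a ⊆ phi '' ((Aaut K n).stepSet S a) := by
      intro x hx
      obtain ⟨t, ht, hxt⟩ := (Aaut (K+1) n).mem_stepSet |>.mp hx
      obtain ⟨s, hsS, rfl⟩ := ht
      match s with
      | none => exact absurd hsS hnS
      | some (j, m) =>
        have hnone1 : (none : ASt) ∉ Astep K (some (j, m)) a := by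
          intro h
          exact hnstep ((Aaut K n).mem_stepSet |>.mpr ⟨some (j, m), hsS, h⟩)
        have := (simStep K j m a hK (hS j m hsS) hnone1).1 hxt
        obtain ⟨y, hy, rfl⟩ := this
        exact ⟨y, (Aaut K n).mem_stepSet |>.mpr ⟨some (j, m), hsS, hy⟩, rfl⟩
    rw [evalFrom_cons, evalFrom_cons]
    have hS' : ∀ j m, some (j, m) ∈ (Aaut K n).stepSet S a → j ≤ 2 * K := by
      intro j' m' h
      obtain ⟨t, ht, hst⟩ := (Aaut K n).mem_stepSet |>.mp h
      match t with
      | none => exact absurd ht hnS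
      | some (j, m) =>
        have hnone1 : (none : ASt) ∉ Astep K (some (j, m)) a := by
          intro hh
          exact hnstep ((Aaut K n).mem_stepSet |>.mpr ⟨some (j, m), ht, hh⟩)
        exact (simStep K j m a hK (hS j m ht) hnone1).2 j' m' hst
    calc (Aaut (K+1) n).evalFrom ((Aaut (K+1) n).stepSet (phi '' S) a) w
        ⊆ (Aaut (K+1) n).evalFrom (phi '' ((Aaut K n).stepSet S a)) w := by
          -- need mono for Aaut (K+1)
          exact evalFrom_mono (K+1) n _ _ hkey w
      _ ⊆ phi '' ((Aaut K n).evalFrom ((Aaut K n).stepSet S a) w) := ih _ hS' hnone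

/-- Given the induction hypotheses that `A_{k,n-1}` rejects `W_{k,n-1}` and that
`A_{k-1,n}` rejects `W_{k-1,n}`, the automaton `A_{k,n}` rejects `W_{k,n}`:
after reading `W_{k,n-1} a_n` it can only be in one of the states `(1;m)`,
`1 ≤ m ≤ n`, or `(k+1;n)`, and from none of these states is the remaining
suffix `W_{k-1,n}` accepted. -/
theorem stmt_18 (k n : ℕ) (hk : 1 ≤ k) (hn : 2 ≤ n)
    (ih1 : W k (n - 1) ∉ (Aaut k (n - 1)).accepts)
    (ih2 : W (k - 1) n ∉ (Aaut (k - 1) n).accepts) :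
    (∀ q ∈ (Aaut k n).evalFrom (Aaut k n).start (W k (n - 1) ++ [n]),
        q = some (k + 1, n) ∨ ∃ m, 1 ≤ m ∧ m ≤ n ∧ q = some (1, m)) ∧
    (∀ q : ASt, (q = some (k + 1, n) ∨ ∃ m, 1 ≤ m ∧ m ≤ n ∧ q = some (1, m)) →
        ∀ f ∈ (Aaut k n).evalFrom {q} (W (k - 1) n), f ∉ (Aaut k n).accept) ∧
    W k n ∉ (Aaut k n).accepts := by
  obtain ⟨n', rfl⟩ : ∃ n', n = n' + 1 := ⟨n - 1, by omega⟩
  have hn' : 1 ≤ n' := by omega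
  simp only [Nat.add_sub_cancel] at ih1 ⊢
  have letters_lo : ∀ l ∈ W k n', 1 ≤ l ∧ l ≤ n' := W_letters k n'
  -- Part 1
  have part1 : ∀ q ∈ (Aaut k (n'+1)).evalFrom (Aaut k (n'+1)).start (W k n' ++ [n'+1]),
      q = some (k+1, n'+1) ∨ ∃ m, 1 ≤ m ∧ m ≤ n'+1 ∧ q = some (1, m) := by
    intro q hq
    rw [NFA.evalFrom_append, NFA.evalFrom_singleton] at hq
    obtain ⟨t, ht, hqt⟩ := (Aaut k (n'+1)).mem_stepSet |>.mp hq
    have htgood : t = some (0, n'+1) ∨ ∃ j m, k ≤ j ∧ 1 ≤ m ∧ m ≤ n' ∧ t = some (j, m) := by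
      obtain ⟨s0, hs0, hts0⟩ := mem_evalFrom_decomp _ _ _ _ _ ht
      obtain ⟨m, hm1, hm2, rfl⟩ := hs0
      by_cases hmn : m = n' + 1
      · subst hmn
        left
        have hloop := eval_loop k (n'+1) 0 (n'+1) (W k n')
          (fun l hl => by have := letters_lo l hl; omega)
        rw [hloop] at hts0
        exact hts0
      · right
        have hm2' : m ≤ n' := by omega
        have hsub1 : ({some ((0 : ℕ), m)} : Set ASt) ⊆ (Aaut k n').start := by
          intro x hx
          rw [Set.mem_singleton_iff] at hx
          subst hx
          exact ⟨m, hm1, hm2', rfl⟩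
        have ht'' : t ∈ (Aaut k n').evalFrom (Aaut k n').start (W k n') :=
          evalFrom_mono k n' _ _ hsub1 _ hts0
        have hnacc : t ∉ (Aaut k n').accept := fun hacc => ih1 ⟨t, hacc, ht''⟩
        have hbound := eval_bound k n' n' (W k n') (Aaut k n').start letters_lo
          (by rintro s ⟨m', hm1', hm2', rfl⟩ j mm h; cases h; exact ⟨hm1', hm2'⟩) t ht''
        match t with
        | none => exact absurd (Or.inl rfl) hnacc
        | some (j, mm) =>
          obtain ⟨hb1, hb2⟩ := hbound j mm rfl
          refine ⟨j, mm, ?_, hb1, hb2, rfl⟩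
          by_contra hjk
          exact hnacc (Or.inr ⟨j, mm, by omega, hb1, hb2, rfl⟩)
    rcases htgood with rfl | ⟨j, m, hjk, hm1, hm2, rfl⟩
    · right
      have hqt' : q ∈ Astep k (some (0, n'+1)) (n'+1) := hqt
      have h1 : ¬ (n'+1 : ℕ) < n'+1 := lt_irrefl _
      simp only [Astep, if_neg h1, if_pos rfl, if_pos (by omega : 0 < k),
        Set.mem_setOf_eq] at hqt'
      obtain ⟨m', hm1, hm2, rfl⟩ := hqt'
      exact ⟨m', hm1, hm2, rfl⟩
    · left
      have hqt' : q ∈ Astep k (some (j, m)) (n'+1) := hqt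
      have h1 : ¬ (n'+1 : ℕ) < m := by omega
      have h2 : ¬ (n'+1 : ℕ) = m := by omega
      have h3 : ¬ j < k := by omega
      simp only [Astep, if_neg h1, if_neg h2, if_neg h3, Set.mem_singleton_iff] at hqt'
      exact hqt'
  -- Part 2
  have part2 : ∀ q : ASt, (q = some (k + 1, n'+1) ∨ ∃ m, 1 ≤ m ∧ m ≤ n'+1 ∧ q = some (1, m)) →
      ∀ f ∈ (Aaut k (n'+1)).evalFrom {q} (W (k - 1) (n'+1)), f ∉ (Aaut k (n'+1)).accept := by
    intro q hq f hf
    have lettersW : ∀ l ∈ W (k-1) (n'+1), l ≤ n'+1 := fun l hl => (W_letters _ _ l hl).2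
    have hcnt : (W (k-1) (n'+1)).count (n'+1) = k - 1 := W_count_s18 (k-1) n'
    rcases hq with rfl | ⟨m, hm1, hm2, rfl⟩
    · have heval := eval_high k (n'+1) (k+1) (W (k-1) (n'+1)) lettersW (by omega) (by omega)
      rw [heval, Set.mem_singleton_iff] at hf
      subst hf
      rintro (h | ⟨j, m2, hj, hm1', hm2', heq⟩)
      · simp at h
      · simp only [Option.some.injEq, Prod.mk.injEq] at heq
        omega
    · by_cases hk1 : k = 1
      · subst hk1
        have hW0 : W (1 - 1) (n'+1) = [] := by
          have h10 : (1 : ℕ) - 1 = 0 := rfl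
          rw [h10]
          simp [W]
        rw [hW0, NFA.evalFrom_nil, Set.mem_singleton_iff] at hf
        subst hf
        rintro (h | ⟨j, m2, hj, hm1', hm2', heq⟩)
        · simp at h
        · simp only [Option.some.injEq, Prod.mk.injEq] at heq
          omega
      · obtain ⟨K, rfl⟩ : ∃ K, k = K + 1 := ⟨k - 1, by omega⟩
        have hK : 1 ≤ K := by omega
        simp only [Nat.add_sub_cancel] at hf ih2 hcnt
        have hnone : (none : ASt) ∉ (Aaut K (n'+1)).evalFrom (Aaut K (n'+1)).start (W K (n'+1)) :=
          fun h => ih2 ⟨none, Or.inl rfl, h⟩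
        have hsub : ({some ((1 : ℕ), m)} : Set ASt) ⊆ phi '' (Aaut K (n'+1)).start := by
          intro x hx
          rw [Set.mem_singleton_iff] at hx
          subst hx
          have hst : (some ((0 : ℕ), m) : ASt) ∈ (Aaut K (n'+1)).start := ⟨m, hm1, hm2, rfl⟩
          exact Set.mem_image_of_mem phi hst
        have h1 : f ∈ (Aaut (K+1) (n'+1)).evalFrom (phi '' (Aaut K (n'+1)).start) (W K (n'+1)) :=
          evalFrom_mono (K+1) (n'+1) _ _ hsub _ hf
        have h2 := sim K (n'+1) hK (W K (n'+1)) (Aaut K (n'+1)).start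
          (by
            rintro j m' ⟨m'', hx1, hx2, heq⟩
            simp only [Option.some.injEq, Prod.mk.injEq] at heq
            omega) hnone h1
        obtain ⟨s, hs, rfl⟩ := h2
        have hsnacc : s ∉ (Aaut K (n'+1)).accept := fun h => ih2 ⟨s, h, hs⟩
        match s with
        | none => exact absurd (Or.inl rfl) hsnacc
        | some (j, m') =>
          rintro (h | ⟨j2, m2, hj2, hm1', hm2', heq⟩)
          · simp [phi] at h
          · have hphi : phi (some (j, m')) = some (j+1, m') := rfl
            rw [hphi] at heq
            simp only [Option.some.injEq, Prod.mk.injEq] at heq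
            obtain ⟨h1, h2⟩ := heq
            subst h1; subst h2
            exact hsnacc (Or.inr ⟨j, m', by omega, hm1', hm2', rfl⟩)
  refine ⟨part1, part2, ?_⟩
  intro hacc
  have hWeq : W k (n'+1) = (W k n' ++ [n'+1]) ++ W (k - 1) (n'+1) := by
    obtain ⟨k', rfl⟩ : ∃ k', k = k' + 1 := ⟨k - 1, by omega⟩
    rw [W]
    simp
  obtain ⟨f, hf, hfev⟩ := hacc
  have hfev2 : f ∈ (Aaut k (n'+1)).evalFrom (Aaut k (n'+1)).start (W k (n'+1)) := hfev
  rw [hWeq, evalFrom_append] at hfev2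
  obtain ⟨q, hq, hfq⟩ := mem_evalFrom_decomp _ _ _ _ _ hfev2
  exact part2 q (part1 q hq) f hfq hf
end
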